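/- The Riccati terminal value problem K'(t) = 2βK(t) + γ_N K(t)² − λ on [0,T] with K(T) = c has a unique C¹ solution K defined on all of [0,T], and this solution satisfies min{c, k⁺} ≤ K(t) ≤ max{c, k⁺} for all t ∈ [0,T]; in particular K(t) ≥ 0 on [0,T]. -/

import Mathlib

open Set


lemma riccati_unique (T β γ lam : ℝ) (K L : ℝ → ℝ)
    (hK : ∀ t ∈ Icc (0:ℝ) T, HasDerivAt K (2 * β * K t + γ * K t ^ 2 - lam) t)
    (hL : ∀ t ∈ Icc (0:ℝ) T, HasDerivAt L (2 * β * L t + γ * L t ^ 2 - lam) t)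
    (hend : K T = L T) : EqOn K L (Icc (0:ℝ) T) := by
  rcases le_or_gt T 0 with h | hT
  · intro t ht
    have h1 : t = T := le_antisymm (ht.2) (h.trans ht.1)
    simpa [h1] using hend
  -- continuity
  have hKc : ContinuousOn K (Icc 0 T) := fun t ht => ((hK t ht).continuousAt).continuousWithinAt
  have hLc : ContinuousOn L (Icc 0 T) := fun t ht => ((hL t ht).continuousAt).continuousWithinAt
  -- boundedness
  obtain ⟨R1, hR1⟩ := (isCompact_Icc (a := (0:ℝ)) (b := T)).exists_bound_of_continuousOn hKc
  obtain ⟨R2, hR2⟩ := (isCompact_Icc (a := (0:ℝ)) (b := T)).exists_bound_of_continuousOn hLc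
  set R : ℝ := max (max R1 R2) 0 with hRdef
  have hR0 : 0 ≤ R := le_max_right _ _
  have hKR : ∀ t ∈ Icc (0:ℝ) T, K t ∈ Metric.closedBall (0:ℝ) R := by
    intro t ht
    simp only [Metric.mem_closedBall, Real.dist_eq, sub_zero]
    exact (hR1 t ht).trans ((le_max_left R1 R2).trans (le_max_left _ _))
  have hLR : ∀ t ∈ Icc (0:ℝ) T, L t ∈ Metric.closedBall (0:ℝ) R := by
    intro t ht
    simp only [Metric.mem_closedBall, Real.dist_eq, sub_zero]
    exact (hR2 t ht).trans ((le_max_right R1 R2).trans (le_max_left _ _))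
  -- Lipschitz constant
  set C : NNReal := ⟨|2 * β| + 2 * |γ| * R, by positivity⟩ with hCdef
  have hlip : ∀ t : ℝ, LipschitzOnWith C (fun x : ℝ => 2 * β * x + γ * x ^ 2 - lam)
      (Metric.closedBall (0:ℝ) R) := by
    intro t
    apply LipschitzOnWith.of_dist_le_mul
    intro x hx y hy
    simp only [Metric.mem_closedBall, Real.dist_eq, sub_zero] at hx hy
    have : (2 * β * x + γ * x ^ 2 - lam) - (2 * β * y + γ * y ^ 2 - lam)
        = (2 * β + γ * (x + y)) * (x - y) := by ring
    rw [Real.dist_eq, Real.dist_eq, this, abs_mul]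
    have hcx : |2 * β + γ * (x + y)| ≤ (C : ℝ) := by
      calc |2 * β + γ * (x + y)| ≤ |2 * β| + |γ * (x + y)| := abs_add_le _ _
        _ ≤ |2 * β| + |γ| * (|x| + |y|) := by
            have h2 : |γ * (x + y)| = |γ| * |x + y| := abs_mul _ _
            have h := abs_add_le x y
            nlinarith [abs_nonneg γ]
        _ ≤ |2 * β| + |γ| * (R + R) := by gcongr
        _ = (C : ℝ) := by rw [hCdef]; show _ = |2 * β| + 2 * |γ| * R; ring
    exact mul_le_mul_of_nonneg_right hcx (abs_nonneg _)
  exact ODE_solution_unique_of_mem_Icc_left (fun t _ => hlip t) hKc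
    (fun t ht => (hK t ⟨le_of_lt ht.1, ht.2⟩).hasDerivWithinAt)
    (fun t ht => hKR t ⟨le_of_lt ht.1, ht.2⟩) hLc
    (fun t ht => (hL t ⟨le_of_lt ht.1, ht.2⟩).hasDerivWithinAt)
    (fun t ht => hLR t ⟨le_of_lt ht.1, ht.2⟩) hend

lemma riccati_sol (T γ β lam kp km c : ℝ) (hγ : 0 < γ)
    (hsum : γ * (kp + km) = -(2 * β)) (hprod : γ * (kp * km) = -lam)
    (hA : 0 < c - km) (hlt : km < kp) :
    ∃ K : ℝ → ℝ, (∀ t ≤ T, HasDerivAt K (2 * β * K t + γ * K t ^ 2 - lam) t) ∧ K T = c ∧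
      ∀ t ≤ T, min c kp ≤ K t ∧ K t ≤ max c kp := by
  set A : ℝ := c - km with hAdef
  set B : ℝ := c - kp with hBdef
  set E : ℝ → ℝ := fun t => Real.exp (γ * (kp - km) * (t - T)) with hEdef
  have hE1 : ∀ t ≤ T, E t ≤ 1 := by
    intro t ht
    rw [hEdef]
    simp only
    rw [← Real.exp_zero]
    apply Real.exp_le_exp.mpr
    have h1 : 0 < γ * (kp - km) := by nlinarith
    nlinarith
  have hEpos : ∀ t, 0 < E t := fun t => Real.exp_pos _
  have hden : ∀ t ≤ T, 0 < A - B * E t := by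
    intro t ht
    rcases le_or_gt B 0 with h | h
    · nlinarith [hEpos t, hE1 t ht]
    · have : B * E t ≤ B := by nlinarith [hE1 t ht, hEpos t]
      have hBA : B < A := by rw [hAdef, hBdef]; linarith
      linarith
  refine ⟨fun t => (kp * A - km * B * E t) / (A - B * E t), ?_, ?_, ?_⟩
  · intro t ht
    have hdent := hden t ht
    have hdne : A - B * E t ≠ 0 := ne_of_gt hdent
    have hE' : HasDerivAt E (γ * (kp - km) * E t) t := by
      rw [hEdef]
      simpa [mul_comm] using ((hasDerivAt_id t).sub_const T).const_mul (γ * (kp - km)) |>.exp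
    have hnum' : HasDerivAt (fun t => kp * A - km * B * E t)
        (-(km * B * (γ * (kp - km) * E t))) t := by
      simpa using ((hE'.const_mul (km * B)).const_sub (kp * A))
    have hden' : HasDerivAt (fun t => A - B * E t) (-(B * (γ * (kp - km) * E t))) t := by
      simpa using ((hE'.const_mul B).const_sub A)
    have := hnum'.div hden' hdne
    refine this.congr_deriv ?_
    have quad : ∀ x : ℝ, 2 * β * x + γ * x ^ 2 - lam = γ * (x - kp) * (x - km) := by
      intro x
      linear_combination x * hsum - hprod
    rw [quad]
    field_simp
    ring
  · show (kp * A - km * B * E T) / (A - B * E T) = c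
    have hET : E T = 1 := by rw [hEdef]; simp
    rw [hET, hAdef, hBdef, div_eq_iff (by intro hcon; nlinarith : (c - km) - (c - kp) * 1 ≠ 0)]
    ring
  · intro t ht
    have hdent := hden t ht
    have hdne : A - B * E t ≠ 0 := ne_of_gt hdent
    have h1 : (kp * A - km * B * E t) / (A - B * E t) - c
        = A * (kp - c) * (1 - E t) / (A - B * E t) := by
      rw [eq_div_iff hdne, sub_mul, div_mul_cancel₀ _ hdne]
      rw [hAdef, hBdef]
      ring
    have h2 : (kp * A - km * B * E t) / (A - B * E t) - kp
        = B * E t * (kp - km) / (A - B * E t) := by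
      field_simp
      ring
    have hE1t := hE1 t ht
    have hEpt := hEpos t
    rcases le_total c kp with h | h
    · have hx : 0 ≤ A * (kp - c) * (1 - E t) :=
        mul_nonneg (mul_nonneg hA.le (by linarith)) (by linarith)
      have hy : B * E t * (kp - km) ≤ 0 :=
        mul_nonpos_of_nonpos_of_nonneg
          (mul_nonpos_of_nonpos_of_nonneg (by linarith) hEpt.le) (by linarith)
      rw [min_eq_left h, max_eq_right h]
      exact ⟨by linarith [div_nonneg hx hdent.le],
        by linarith [div_nonpos_of_nonpos_of_nonneg hy hdent.le]⟩
    · have hx : A * (kp - c) * (1 - E t) ≤ 0 :=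
        mul_nonpos_of_nonpos_of_nonneg
          (mul_nonpos_of_nonneg_of_nonpos hA.le (by linarith)) (by linarith)
      have hy : 0 ≤ B * E t * (kp - km) :=
        mul_nonneg (mul_nonneg (by linarith) hEpt.le) (by linarith)
      rw [min_eq_right h, max_eq_left h]
      exact ⟨by linarith [div_nonneg hy hdent.le],
        by linarith [div_nonpos_of_nonpos_of_nonneg hx hdent.le]⟩

lemma riccati_sol_deg (T γ c : ℝ) (hγ : 0 < γ) (hc : 0 ≤ c) :
    ∃ K : ℝ → ℝ, (∀ t ≤ T, HasDerivAt K (γ * K t ^ 2) t) ∧ K T = c ∧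
      ∀ t ≤ T, 0 ≤ K t ∧ K t ≤ c := by
  have hden : ∀ t ≤ T, (1:ℝ) ≤ 1 + γ * c * (T - t) := by
    intro t ht
    nlinarith [mul_nonneg (mul_nonneg hγ.le hc) (sub_nonneg.mpr ht)]
  refine ⟨fun t => c / (1 + γ * c * (T - t)), ?_, by norm_num, ?_⟩
  · intro t ht
    have hdp : (0:ℝ) < 1 + γ * c * (T - t) := lt_of_lt_of_le one_pos (hden t ht)
    have hne : (1:ℝ) + γ * c * (T - t) ≠ 0 := ne_of_gt hdp
    have hden' : HasDerivAt (fun t => 1 + γ * c * (T - t)) (-(γ * c)) t := by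
      simpa using (((hasDerivAt_id t).const_sub T).const_mul (γ * c)).const_add 1
    have := (hasDerivAt_const t c).div hden' hne
    refine this.congr_deriv ?_
    field_simp
    ring
  · intro t ht
    have hdp : (0:ℝ) < 1 + γ * c * (T - t) := lt_of_lt_of_le one_pos (hden t ht)
    exact ⟨div_nonneg hc hdp.le, div_le_self hc (hden t ht)⟩

/-- The Riccati terminal value problem `K' = 2βK + γ_N K² − λ` on `[0,T]`
with `K(T) = c` has a unique C¹ solution on all of `[0,T]`, and this solution satisfies
`min {c, k⁺} ≤ K(t) ≤ max {c, k⁺}` for all `t ∈ [0,T]`; in particular `K(t) ≥ 0`. -/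
theorem riccati_existence_uniqueness_and_bounds
    (N : ℕ) (hN : 2 ≤ N) (T a q ε c : ℝ)
    (hT : 0 < T) (ha : 0 ≤ a) (hq : 0 ≤ q) (hc : 0 ≤ c) (hqε : q ^ 2 ≤ ε)
    (β γN lam kplus : ℝ)
    (hβ : β = a + (1 - 1 / (N : ℝ)) * q)
    (hγ : γN = (1 - 1 / (N : ℝ)) ^ 2)
    (hlam : lam = ε - q ^ 2)
    (hk : kplus = (-β + Real.sqrt (β ^ 2 + γN * lam)) / γN) :
    ∃ K : ℝ → ℝ,
      (∀ t ∈ Icc (0 : ℝ) T, HasDerivAt K (2 * β * K t + γN * K t ^ 2 - lam) t) ∧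
      K T = c ∧
      (∀ t ∈ Icc (0 : ℝ) T, min c kplus ≤ K t ∧ K t ≤ max c kplus ∧ 0 ≤ K t) ∧
      (∀ L : ℝ → ℝ,
        (∀ t ∈ Icc (0 : ℝ) T, HasDerivAt L (2 * β * L t + γN * L t ^ 2 - lam) t) →
        L T = c → EqOn K L (Icc (0 : ℝ) T)) := by
  have hN2 : (2:ℝ) ≤ (N:ℝ) := by exact_mod_cast hN
  have hNpos : (0:ℝ) < (N:ℝ) := by linarith
  have hinv : (1:ℝ) / (N:ℝ) ≤ 1 / 2 := by
    apply one_div_le_one_div_of_le <;> linarith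
  have hbase : (0:ℝ) < 1 - 1 / (N:ℝ) := by linarith
  have hγpos : 0 < γN := by rw [hγ]; exact pow_pos hbase 2
  have hβ0 : 0 ≤ β := by rw [hβ]; exact add_nonneg ha (mul_nonneg hbase.le hq)
  have hlam0 : 0 ≤ lam := by rw [hlam]; linarith
  obtain ⟨δ, hδdef⟩ : ∃ δ : ℝ, δ = Real.sqrt (β ^ 2 + γN * lam) := ⟨_, rfl⟩
  rw [← hδdef] at hk
  have harg : 0 ≤ β ^ 2 + γN * lam := by positivity
  have hδsq : δ ^ 2 = β ^ 2 + γN * lam := by rw [hδdef]; exact Real.sq_sqrt harg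
  have hδ0 : 0 ≤ δ := hδdef ▸ Real.sqrt_nonneg _
  have hδβ : β ≤ δ := by
    calc β = Real.sqrt (β ^ 2) := by rw [Real.sqrt_sq hβ0]
      _ ≤ δ := hδdef ▸ Real.sqrt_le_sqrt (by nlinarith)
  have hkp0 : 0 ≤ kplus := by
    rw [hk]
    exact div_nonneg (by linarith) hγpos.le
  obtain ⟨km, hkmdef⟩ : ∃ km : ℝ, km = (-β - δ) / γN := ⟨_, rfl⟩
  have hγne : γN ≠ 0 := ne_of_gt hγpos
  have hsum : γN * (kplus + km) = -(2 * β) := by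
    rw [hk, hkmdef]
    field_simp
    ring
  have hprod : γN * (kplus * km) = -lam := by
    have hkm2 : kplus * km = (β ^ 2 - δ ^ 2) / γN ^ 2 := by
      rw [hk, hkmdef]; field_simp; ring
    rw [hkm2, hδsq]
    field_simp
    ring
  -- existence
  obtain ⟨K, hKd, hKT, hKb⟩ :
      ∃ K : ℝ → ℝ,
        (∀ t ∈ Icc (0 : ℝ) T, HasDerivAt K (2 * β * K t + γN * K t ^ 2 - lam) t) ∧
        K T = c ∧
        (∀ t ∈ Icc (0 : ℝ) T, min c kplus ≤ K t ∧ K t ≤ max c kplus ∧ 0 ≤ K t) := by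
    rcases eq_or_lt_of_le hδ0 with h0 | hδpos
    · -- degenerate case: β = 0, lam = 0, kplus = 0
      have hz : β ^ 2 + γN * lam = 0 := by rw [← hδsq, ← h0]; norm_num
      have hβz : β = 0 := by
        have h1 : β ^ 2 = 0 := by
          linarith [mul_nonneg hγpos.le hlam0, sq_nonneg β]
        exact (pow_eq_zero_iff two_ne_zero).mp h1
      have hlamz : lam = 0 := by
        have h2 : γN * lam = 0 := by linear_combination hz - β * hβz
        rcases mul_eq_zero.mp h2 with h | h
        · exact absurd h hγne
        · exact h
      have hkpz : kplus = 0 := by rw [hk, ← h0, hβz]; simp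
      obtain ⟨K, hKd, hKT, hKb⟩ := riccati_sol_deg T γN c hγpos hc
      refine ⟨K, ?_, hKT, ?_⟩
      · intro t ht
        have := hKd t ht.2
        convert this using 1
        rw [hβz, hlamz]; ring
      · intro t ht
        obtain ⟨h1, h2⟩ := hKb t ht.2
        refine ⟨?_, ?_, h1⟩
        · rw [hkpz, min_eq_right hc]; exact h1
        · rw [hkpz, max_eq_left hc]; exact h2
    · -- nondegenerate case
      have hlt : km < kplus := by
        rw [hk, hkmdef]
        gcongr
        linarith
      have hkmneg : km < 0 := by
        rw [hkmdef]
        exact div_neg_of_neg_of_pos (by linarith) hγpos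
      have hA : 0 < c - km := by linarith
      obtain ⟨K, hKd, hKT, hKb⟩ :=
        riccati_sol T γN β lam kplus km c hγpos hsum hprod hA hlt
      refine ⟨K, fun t ht => hKd t ht.2, hKT, fun t ht => ?_⟩
      obtain ⟨h1, h2⟩ := hKb t ht.2
      exact ⟨h1, h2, le_trans (le_min hc hkp0) h1⟩
  exact ⟨K, hKd, hKT, hKb, fun L hLd hLT =>
    riccati_unique T β γN lam K L hKd hLd (by rw [hKT, hLT])⟩
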